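/- Let X be a real Banach space, let A, B : X →L[ℝ] X be bounded linear operators that commute (A ∘ B = B ∘ A), and let τ > 0. Then τ·φ₁(τ·(A+B)) − τ·exp((τ/2)·A) ∘ φ₁(τ·B) = −∫_{s∈[0,τ]} ∫_{ξ∈[0,s]} (τ/2 − s) · exp(τ·A) ∘ exp((τ−ξ)·B) ∘ B ∘ A dξ ds − ∫_{s∈[0,τ]} ∫_{σ∈[s,τ/2]} ∫_{ξ∈[0,σ]} exp((τ−s)·B) ∘ exp((τ−ξ)·A) ∘ A ∘ A dξ dσ ds, where the inner integral over σ from s to τ/2 is an oriented (interval) integral. -/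

import Mathlib

open MeasureTheory intervalIntegral
open scoped Nat

set_option synthInstance.maxHeartbeats 1000000
set_option maxHeartbeats 2000000

/-- The operator `φ_ℓ(T) = ∑_{k=0}^∞ T^k / (ℓ+k)!` (for `ℓ = 0` this is `exp T`). -/
noncomputable def phi {X : Type*} [NormedAddCommGroup X] [NormedSpace ℝ X] [CompleteSpace X]
    (ℓ : ℕ) (T : X →L[ℝ] X) : X →L[ℝ] X :=
  ∑' k : ℕ, (((ℓ + k)! : ℝ)⁻¹) • T ^ k

section Aux
variable {𝔸 : Type*} [NormedRing 𝔸] [NormedAlgebra ℝ 𝔸] [CompleteSpace 𝔸]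

lemma contExpSub (T : 𝔸) (c : ℝ) :
    Continuous fun s : ℝ => NormedSpace.exp ((c - s) • T) := by
  letI : NormedAlgebra ℚ 𝔸 := .restrictScalars ℚ ℝ 𝔸
  exact NormedSpace.exp_continuous.comp ((continuous_const.sub continuous_id).smul continuous_const)

lemma contExpSmul (T : 𝔸) : Continuous fun s : ℝ => NormedSpace.exp (s • T) := by
  letI : NormedAlgebra ℚ 𝔸 := .restrictScalars ℚ ℝ 𝔸
  exact NormedSpace.exp_continuous.comp (continuous_id.smul continuous_const)

lemma hasDerivAt_expSub (T : 𝔸) (c ξ : ℝ) :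
    HasDerivAt (fun u : ℝ => NormedSpace.exp ((c - u) • T))
      (-(NormedSpace.exp ((c - ξ) • T) * T)) ξ := by
  have h1 : HasDerivAt (fun u : ℝ => c - u) (-1 : ℝ) ξ := by
    simpa using (hasDerivAt_id ξ).const_sub c
  have h2 := hasDerivAt_exp_smul_const (𝕂 := ℝ) T (c - ξ)
  have := HasDerivAt.scomp (x := ξ) h2 h1
  simpa [Function.comp_def] using this

lemma ftc2 (D T : 𝔸) (c a b : ℝ) :
    (∫ ξ in a..b, D * (NormedSpace.exp ((c - ξ) • T) * T)) =
      D * NormedSpace.exp ((c - a) • T) - D * NormedSpace.exp ((c - b) • T) := by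
  have hd : ∀ ξ : ℝ, HasDerivAt (fun u : ℝ => -(D * NormedSpace.exp ((c - u) • T)))
      (D * (NormedSpace.exp ((c - ξ) • T) * T)) ξ := fun ξ => by
    simpa [mul_neg, mul_assoc, Pi.neg_def] using ((hasDerivAt_expSub T c ξ).const_mul D).neg
  have hi : IntervalIntegrable
      (fun ξ : ℝ => D * (NormedSpace.exp ((c - ξ) • T) * T)) volume a b :=
    (continuous_const.mul ((contExpSub T c).mul continuous_const)).intervalIntegrable a b
  rw [intervalIntegral.integral_eq_sub_of_hasDerivAt (fun ξ _ => hd ξ) hi]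
  abel

lemma ftc3 (D T C : 𝔸) (c a b : ℝ) :
    (∫ ξ in a..b, D * (NormedSpace.exp ((c - ξ) • T) * (T * C))) =
      D * (NormedSpace.exp ((c - a) • T) * C) - D * (NormedSpace.exp ((c - b) • T) * C) := by
  have hd : ∀ ξ : ℝ, HasDerivAt (fun u : ℝ => -(D * (NormedSpace.exp ((c - u) • T) * C)))
      (D * (NormedSpace.exp ((c - ξ) • T) * (T * C))) ξ := fun ξ => by
    simpa [mul_neg, neg_mul, mul_assoc, Pi.neg_def] using
      (((hasDerivAt_expSub T c ξ).mul_const C).const_mul D).neg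
  have hi : IntervalIntegrable
      (fun ξ : ℝ => D * (NormedSpace.exp ((c - ξ) • T) * (T * C))) volume a b :=
    (continuous_const.mul ((contExpSub T c).mul continuous_const)).intervalIntegrable a b
  rw [intervalIntegral.integral_eq_sub_of_hasDerivAt (fun ξ _ => hd ξ) hi]
  abel

lemma integral_const_mul_op (D : 𝔸) {f : ℝ → 𝔸} {a b : ℝ}
    (hf : IntervalIntegrable f volume a b) :
    (∫ x in a..b, D * f x) = D * ∫ x in a..b, f x := by
  simpa using (ContinuousLinearMap.mul ℝ 𝔸 D).intervalIntegral_comp_comm hf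

end Aux

lemma integral_exp_eq_phi {X : Type*} [NormedAddCommGroup X] [NormedSpace ℝ X] [CompleteSpace X]
    (T : X →L[ℝ] X) {τ : ℝ} (hτ : 0 ≤ τ) :
    (∫ s in (0:ℝ)..τ, NormedSpace.exp (s • T)) = τ • phi 1 (τ • T) := by
  have hptw : ∀ s : ℝ, NormedSpace.exp (s • T)
      = ∑' k : ℕ, (((k)! : ℝ)⁻¹ * s ^ k) • T ^ k := by
    intro s
    rw [NormedSpace.exp_eq_tsum (𝕂 := ℝ)]
    exact tsum_congr fun k => by rw [smul_pow, smul_smul ((k)! : ℝ)⁻¹ (s ^ k) (T ^ k)]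
  have hFi : ∀ k : ℕ, Integrable (fun s : ℝ => (((k)! : ℝ)⁻¹ * s ^ k) • T ^ k)
      (volume.restrict (Set.Ioc 0 τ)) :=
    fun k => ((continuous_const.mul (continuous_pow k)).smul continuous_const).integrableOn_Ioc
  have hnorm : ∀ k : ℕ, ‖(((k)! : ℝ)⁻¹ : ℝ) • (τ • T) ^ k‖
      = ((k)! : ℝ)⁻¹ * τ ^ k * ‖T ^ k‖ := by
    intro k
    rw [smul_pow, smul_smul ((k)! : ℝ)⁻¹ (τ ^ k) (T ^ k),
      norm_smul (((k)! : ℝ)⁻¹ * τ ^ k) (T ^ k), Real.norm_eq_abs, abs_of_nonneg (by positivity)]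
  have hFs : Summable fun k : ℕ =>
      ∫ s, ‖(((k)! : ℝ)⁻¹ * s ^ k) • T ^ k‖ ∂(volume.restrict (Set.Ioc 0 τ)) := by
    refine Summable.of_nonneg_of_le (fun k => integral_nonneg fun s => norm_nonneg _)
      (fun k => ?_) ((NormedSpace.norm_expSeries_summable' (𝕂 := ℝ) (τ • T)).mul_left τ)
    have hle : ∀ s ∈ Set.Ioc (0:ℝ) τ,
        ‖(((k)! : ℝ)⁻¹ * s ^ k) • T ^ k‖ ≤ ((k)! : ℝ)⁻¹ * τ ^ k * ‖T ^ k‖ := by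
      intro s hs
      rw [norm_smul (((k)! : ℝ)⁻¹ * s ^ k) (T ^ k), norm_mul, Real.norm_eq_abs,
        Real.norm_eq_abs,
        abs_of_nonneg (by positivity : (0:ℝ) ≤ ((k)! : ℝ)⁻¹),
        abs_of_nonneg (pow_nonneg hs.1.le k)]
      have : s ^ k ≤ τ ^ k := pow_le_pow_left₀ hs.1.le hs.2 k
      gcongr
    calc (∫ s, ‖(((k)! : ℝ)⁻¹ * s ^ k) • T ^ k‖ ∂(volume.restrict (Set.Ioc 0 τ)))
        ≤ ∫ _, ((k)! : ℝ)⁻¹ * τ ^ k * ‖T ^ k‖ ∂(volume.restrict (Set.Ioc 0 τ)) := by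
          refine integral_mono_of_nonneg (Filter.Eventually.of_forall fun s => norm_nonneg _)
            (integrable_const _) ?_
          exact (ae_restrict_iff' measurableSet_Ioc).2 (Filter.Eventually.of_forall hle)
      _ = (volume (Set.Ioc (0:ℝ) τ)).toReal * (((k)! : ℝ)⁻¹ * τ ^ k * ‖T ^ k‖) := by
          rw [MeasureTheory.setIntegral_const]; simp [ENNReal.toReal_ofReal']
      _ ≤ τ * ‖(((k)! : ℝ)⁻¹ : ℝ) • (τ • T) ^ k‖ := by
          rw [hnorm k, Real.volume_Ioc, ENNReal.toReal_ofReal (by linarith)]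
          simp
  have hswap := MeasureTheory.integral_tsum_of_summable_integral_norm hFi hFs
  rw [intervalIntegral.integral_of_le hτ]
  simp only [hptw]
  rw [← hswap]
  have hterm : ∀ k : ℕ, (∫ s, (((k)! : ℝ)⁻¹ * s ^ k) • T ^ k ∂(volume.restrict (Set.Ioc 0 τ)))
      = (τ * (((1 + k)! : ℝ)⁻¹ * τ ^ k)) • T ^ k := by
    intro k
    rw [← intervalIntegral.integral_of_le hτ, intervalIntegral.integral_smul_const,
      intervalIntegral.integral_const_mul, integral_pow]
    congr 1
    have h1 : ((1 + k)! : ℝ) = (k + 1) * (k)! := by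
      rw [add_comm 1 k, Nat.factorial_succ]; push_cast; ring
    rw [h1]
    have hk : ((k)! : ℝ) ≠ 0 := Nat.cast_ne_zero.mpr (Nat.factorial_ne_zero k)
    have hk1 : ((k : ℝ) + 1) ≠ 0 := by positivity
    field_simp
    ring
  simp only [hterm]
  rw [phi, ← tsum_const_smul'' (τ : ℝ)]
  refine tsum_congr fun k => ?_
  rw [smul_pow, smul_smul, smul_smul]
  congr 1
  ring

theorem stmt5 {X : Type*} [NormedAddCommGroup X] [NormedSpace ℝ X] [CompleteSpace X]
    (A B : X →L[ℝ] X) (hcomm : A.comp B = B.comp A) (τ : ℝ) (hτ : 0 < τ) :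
    τ • phi 1 (τ • (A + B)) - τ • (NormedSpace.exp ((τ/2) • A)).comp (phi 1 (τ • B)) =
      -(∫ s in (0:ℝ)..τ, ∫ ξ in (0:ℝ)..s, (τ/2 - s) •
          ((NormedSpace.exp (τ • A)).comp
            ((NormedSpace.exp ((τ - ξ) • B)).comp (B.comp A))))
      - ∫ s in (0:ℝ)..τ, ∫ σ in s..(τ/2), ∫ ξ in (0:ℝ)..σ,
          (NormedSpace.exp ((τ - s) • B)).comp
            ((NormedSpace.exp ((τ - ξ) • A)).comp (A.comp A)) := by
  have hAB : Commute A B := by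
    show A * B = B * A
    simp only [ContinuousLinearMap.mul_def]
    exact hcomm
  have hcom : ∀ a b : ℝ, Commute (NormedSpace.exp (a • A)) (NormedSpace.exp (b • B)) :=
    fun a b => Commute.exp ((hAB.smul_left a).smul_right b)
  simp only [← ContinuousLinearMap.mul_def]
  -- evaluate the innermost integrals
  have h1 : ∀ s : ℝ,
      (∫ ξ in (0:ℝ)..s, (τ/2 - s) •
        (NormedSpace.exp (τ • A) * (NormedSpace.exp ((τ - ξ) • B) * (B * A))))
      = (τ/2 - s) •
          (NormedSpace.exp (τ • A) * (NormedSpace.exp (τ • B) * A)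
            - NormedSpace.exp (τ • A) * (NormedSpace.exp ((τ - s) • B) * A)) := by
    intro s
    rw [intervalIntegral.integral_smul]
    congr 1
    simpa using ftc3 (NormedSpace.exp (τ • A)) B A τ 0 s
  have h2 : ∀ s σ : ℝ,
      (∫ ξ in (0:ℝ)..σ, NormedSpace.exp ((τ - s) • B) *
        (NormedSpace.exp ((τ - ξ) • A) * (A * A)))
      = NormedSpace.exp ((τ - s) • B) * (NormedSpace.exp (τ • A) * A)
        - NormedSpace.exp ((τ - s) • B) * (NormedSpace.exp ((τ - σ) • A) * A) :=
    fun s σ => by simpa using ftc3 (NormedSpace.exp ((τ - s) • B)) A A τ 0 σ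
  have h3 : ∀ s : ℝ,
      (∫ σ in s..(τ/2),
        (NormedSpace.exp ((τ - s) • B) * (NormedSpace.exp (τ • A) * A)
          - NormedSpace.exp ((τ - s) • B) * (NormedSpace.exp ((τ - σ) • A) * A)))
      = (τ/2 - s) • (NormedSpace.exp ((τ - s) • B) * (NormedSpace.exp (τ • A) * A))
        - (NormedSpace.exp ((τ - s) • B) * NormedSpace.exp ((τ - s) • A)
            - NormedSpace.exp ((τ - s) • B) * NormedSpace.exp ((τ/2) • A)) := by
    intro s
    rw [intervalIntegral.integral_sub intervalIntegrable_const
      (by exact (continuous_const.mul ((contExpSub A τ).mul continuous_const)).intervalIntegrable s (τ/2) :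
        IntervalIntegrable (fun σ : ℝ => NormedSpace.exp ((τ - s) • B) *
          (NormedSpace.exp ((τ - σ) • A) * A)) volume s (τ/2)),
      intervalIntegral.integral_const, ftc2 (NormedSpace.exp ((τ - s) • B)) A τ s (τ/2),
      sub_half]
  simp only [h1, h2]
  simp only [h3]
  -- auxiliary integrability facts
  have hi_b : IntervalIntegrable (fun s : ℝ => (τ/2 - s) •
      (NormedSpace.exp ((τ - s) • B) * (NormedSpace.exp (τ • A) * A))) volume 0 τ :=
    (((continuous_const.sub continuous_id).smul
      ((contExpSub B τ).mul continuous_const))).intervalIntegrable 0 τ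
  have hi_c : IntervalIntegrable
      (fun s : ℝ => NormedSpace.exp ((τ - s) • B) * NormedSpace.exp ((τ - s) • A))
      volume 0 τ := ((contExpSub B τ).mul (contExpSub A τ)).intervalIntegrable 0 τ
  have hi_d : IntervalIntegrable
      (fun s : ℝ => NormedSpace.exp ((τ - s) • B) * NormedSpace.exp ((τ/2) • A))
      volume 0 τ := ((contExpSub B τ).mul continuous_const).intervalIntegrable 0 τ
  have hid : IntervalIntegrable (fun s : ℝ => s) volume 0 τ :=
    continuous_id.intervalIntegrable 0 τ
  have czero : (∫ s in (0:ℝ)..τ, (τ/2 - s)) = 0 := by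
    rw [intervalIntegral.integral_sub intervalIntegrable_const hid,
      intervalIntegral.integral_const, integral_id]
    simp [smul_eq_mul]
    ring
  have hswap : ∀ s : ℝ,
      NormedSpace.exp (τ • A) * (NormedSpace.exp ((τ - s) • B) * A)
        = NormedSpace.exp ((τ - s) • B) * (NormedSpace.exp (τ • A) * A) := by
    intro s
    rw [← mul_assoc, ← mul_assoc, (hcom τ (τ - s)).eq]
  have hI1 : (∫ s in (0:ℝ)..τ, (τ/2 - s) •
      (NormedSpace.exp (τ • A) * (NormedSpace.exp (τ • B) * A)
        - NormedSpace.exp (τ • A) * (NormedSpace.exp ((τ - s) • B) * A)))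
      = -(∫ s in (0:ℝ)..τ, (τ/2 - s) •
          (NormedSpace.exp ((τ - s) • B) * (NormedSpace.exp (τ • A) * A))) := by
    simp only [smul_sub, hswap]
    have hi_a : IntervalIntegrable (fun s : ℝ => (τ/2 - s) •
        (NormedSpace.exp (τ • A) * (NormedSpace.exp (τ • B) * A))) volume 0 τ :=
      ((continuous_const.sub continuous_id).smul continuous_const).intervalIntegrable 0 τ
    rw [intervalIntegral.integral_sub hi_a hi_b, intervalIntegral.integral_smul_const, czero]
    simp
  have hP : (∫ s in (0:ℝ)..τ,
      NormedSpace.exp ((τ - s) • B) * NormedSpace.exp ((τ - s) • A))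
      = τ • phi 1 (τ • (A + B)) := by
    have hpt : ∀ s : ℝ, NormedSpace.exp ((τ - s) • B) * NormedSpace.exp ((τ - s) • A)
        = NormedSpace.exp ((τ - s) • (A + B)) := by
      intro s
      letI : NormedAlgebra ℚ (X →L[ℝ] X) := .restrictScalars ℚ ℝ _
      rw [show (τ - s) • (A + B) = (τ - s) • B + (τ - s) • A by rw [smul_add, add_comm],
        NormedSpace.exp_add_of_commute ((hAB.symm.smul_left (τ - s)).smul_right (τ - s))]
    simp only [hpt]
    have hc := intervalIntegral.integral_comp_sub_left
      (a := (0:ℝ)) (b := τ) (fun u : ℝ => NormedSpace.exp (u • (A + B))) τ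
    rw [show (∫ s in (0:ℝ)..τ, NormedSpace.exp ((τ - s) • (A + B)))
        = ∫ s in (0:ℝ)..τ, NormedSpace.exp (s • (A + B)) from by simpa using hc]
    exact integral_exp_eq_phi (A + B) hτ.le
  have hQ : (∫ s in (0:ℝ)..τ,
      NormedSpace.exp ((τ - s) • B) * NormedSpace.exp ((τ/2) • A))
      = τ • (NormedSpace.exp ((τ/2) • A) * phi 1 (τ • B)) := by
    have hpt : ∀ s : ℝ, NormedSpace.exp ((τ - s) • B) * NormedSpace.exp ((τ/2) • A)
        = NormedSpace.exp ((τ/2) • A) * NormedSpace.exp ((τ - s) • B) :=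
      fun s => ((hcom (τ/2) (τ - s)).eq).symm
    simp only [hpt]
    rw [integral_const_mul_op _ ((contExpSub B τ).intervalIntegrable 0 τ)]
    have hc := intervalIntegral.integral_comp_sub_left
      (a := (0:ℝ)) (b := τ) (fun u : ℝ => NormedSpace.exp (u • B)) τ
    rw [show (∫ s in (0:ℝ)..τ, NormedSpace.exp ((τ - s) • B))
        = ∫ s in (0:ℝ)..τ, NormedSpace.exp (s • B) from by simpa using hc,
      integral_exp_eq_phi B hτ.le, mul_smul_comm]
  have hI2 : (∫ s in (0:ℝ)..τ,
      ((τ/2 - s) • (NormedSpace.exp ((τ - s) • B) * (NormedSpace.exp (τ • A) * A))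
        - (NormedSpace.exp ((τ - s) • B) * NormedSpace.exp ((τ - s) • A)
            - NormedSpace.exp ((τ - s) • B) * NormedSpace.exp ((τ/2) • A))))
      = (∫ s in (0:ℝ)..τ, (τ/2 - s) •
          (NormedSpace.exp ((τ - s) • B) * (NormedSpace.exp (τ • A) * A)))
        - (τ • phi 1 (τ • (A + B)) - τ • (NormedSpace.exp ((τ/2) • A) * phi 1 (τ • B))) := by
    rw [intervalIntegral.integral_sub hi_b (hi_c.sub hi_d),
      intervalIntegral.integral_sub hi_c hi_d, hP, hQ]
  rw [hI1, hI2]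
  abel
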